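/- Let v ∈ ℝ^k have ℚ-linearly independent components and let A ∈ SL_k(ℤ) satisfy A v = λ v with λ > 0. Then A is diagonalizable over ℂ. -/

import Mathlib

open Polynomial Matrix

/-- Evaluating a real polynomial at a matrix and applying to an eigenvector. -/
lemma aux_mulVec_aeval {k : ℕ} (M : Matrix (Fin k) (Fin k) ℝ) (v : Fin k → ℝ) (l : ℝ)
    (h : M.mulVec v = l • v) (q : ℝ[X]) :
    (Polynomial.aeval M q).mulVec v = (Polynomial.eval l q) • v := by
  induction q using Polynomial.induction_on with
  | C a =>
      simp [Polynomial.aeval_C, Algebra.algebraMap_eq_smul_one, Matrix.smul_mulVec,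
        Matrix.one_mulVec]
  | add p q hp hq =>
      simp [map_add, Matrix.add_mulVec, hp, hq, add_smul]
  | monomial n a hn =>
      have e1 : (Polynomial.aeval M) (Polynomial.C a * Polynomial.X ^ (n + 1)) =
          (Polynomial.aeval M) (Polynomial.C a * Polynomial.X ^ n) * M := by
        rw [pow_succ, ← mul_assoc, _root_.map_mul, Polynomial.aeval_X]
      have e2 : Polynomial.eval l (Polynomial.C a * Polynomial.X ^ (n + 1)) =
          l * Polynomial.eval l (Polynomial.C a * Polynomial.X ^ n) := by
        simp only [Polynomial.eval_mul, Polynomial.eval_pow, Polynomial.eval_C,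
          Polynomial.eval_X, pow_succ]
        ring
      rw [e1, ← Matrix.mulVec_mulVec, h, Matrix.mulVec_smul, hn, smul_smul, e2]

/-- Let `v ∈ ℝ^k` have `ℚ`-linearly independent components and `A ∈ SL_k(ℤ)` with
`A v = λ v`, `λ > 0`. Then `A` is diagonalizable over `ℂ`. -/
theorem stmt_7 (k : ℕ) (v : Fin k → ℝ) (hv : LinearIndependent ℚ v)
    (A : Matrix (Fin k) (Fin k) ℤ) (hdet : A.det = 1)
    (l : ℝ) (hl : 0 < l)
    (heig : (A.map (Int.cast : ℤ → ℝ)).mulVec v = l • v) :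
    ∃ (P : Matrix (Fin k) (Fin k) ℂ) (d : Fin k → ℂ), IsUnit P ∧
      A.map (Int.cast : ℤ → ℂ) = P * Matrix.diagonal d * P⁻¹ := by
  rcases Nat.eq_zero_or_pos k with hk | hk
  · subst hk
    refine ⟨1, 0, isUnit_one, Subsingleton.elim _ _⟩
  -- notation
  set Ar : Matrix (Fin k) (Fin k) ℝ := A.map (Int.cast : ℤ → ℝ) with hAr
  set Aq : Matrix (Fin k) (Fin k) ℚ := A.map (Int.cast : ℤ → ℚ) with hAq
  set Bc : Matrix (Fin k) (Fin k) ℂ := A.map (Int.cast : ℤ → ℂ) with hBc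
  have hmapR : Aq.map (algebraMap ℚ ℝ) = Ar := by
    ext i j; simp [Aq, Ar]
  have hmapC : Aq.map (algebraMap ℚ ℂ) = Bc := by
    ext i j; simp [Aq, Bc]
  -- each component of v is nonzero
  have hv0 : v ⟨0, hk⟩ ≠ 0 := hv.ne_zero ⟨0, hk⟩
  -- l is algebraic over ℚ
  have key : ∀ q : ℚ[X], (Polynomial.aeval Aq q).map (algebraMap ℚ ℝ) =
      Polynomial.aeval Ar (q.map (algebraMap ℚ ℝ)) := by
    intro q
    have h2 : ((Algebra.ofId ℚ ℝ).mapMatrix Aq : Matrix (Fin k) (Fin k) ℝ) = Ar := by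
      rw [AlgHom.mapMatrix_apply]; exact hmapR
    have h1 := Polynomial.aeval_algHom_apply ((Algebra.ofId ℚ ℝ).mapMatrix) Aq q
    rw [Polynomial.aeval_map_algebraMap, ← h2, h1]
    rfl
  have hval : ∀ q : ℚ[X], Polynomial.aeval l q = 0 → Polynomial.aeval Aq q = 0 := by
    intro q hq
    have h1 : ((Polynomial.aeval Aq q).map (algebraMap ℚ ℝ)).mulVec v = 0 := by
      rw [key q, aux_mulVec_aeval Ar v l heig]
      have : Polynomial.eval l (q.map (algebraMap ℚ ℝ)) = Polynomial.aeval l q := by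
        rw [Polynomial.aeval_def, Polynomial.eval_map]
      rw [this, hq, zero_smul]
    ext i j
    have h2 := congrFun h1 i
    have h3 : ∀ m : Fin k, (Polynomial.aeval Aq q) i m • v m =
        ((Polynomial.aeval Aq q).map (algebraMap ℚ ℝ)) i m * v m := by
      intro m; simp [Algebra.smul_def, Matrix.map_apply]
    have h4 : ∑ m, (Polynomial.aeval Aq q) i m • v m = 0 := by
      rw [Finset.sum_congr rfl fun m _ => h3 m]
      simpa [Matrix.mulVec, dotProduct] using h2
    exact (Fintype.linearIndependent_iff.mp hv _ h4) j
  have halg : IsIntegral ℚ l := by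
    refine (⟨Aq.charpoly, Aq.charpoly_monic, ?_⟩ : IsIntegral ℚ l)
    have hCH : Polynomial.aeval Ar Ar.charpoly = 0 := Matrix.aeval_self_charpoly Ar
    have hch : Aq.charpoly.map (algebraMap ℚ ℝ) = Ar.charpoly := by
      rw [← hmapR, ← Matrix.charpoly_map]
    have := aux_mulVec_aeval Ar v l heig Ar.charpoly
    rw [hCH] at this
    have h0 : Polynomial.eval l Ar.charpoly • v = 0 := by
      rw [← this]; simp [Matrix.zero_mulVec]
    have h0' : Polynomial.eval l Ar.charpoly * v ⟨0, hk⟩ = 0 := by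
      simpa using congrFun h0 ⟨0, hk⟩
    have : Polynomial.eval l Ar.charpoly = 0 := by
      rcases mul_eq_zero.mp h0' with h | h
      · exact h
      · exact absurd h hv0
    rw [Polynomial.eval₂_eq_eval_map, hch]
    exact this
  -- minimal polynomial of l over ℚ, squarefree over ℂ
  set p : ℚ[X] := minpoly ℚ l with hp
  have hpsep : p.Separable := (minpoly.irreducible halg).separable
  have hsqf : Squarefree (p.map (algebraMap ℚ ℂ)) := (hpsep.map).squarefree
  have hAq0 : Polynomial.aeval Aq p = 0 := hval p (minpoly.aeval ℚ l)
  have hBc0 : Polynomial.aeval Bc (p.map (algebraMap ℚ ℂ)) = 0 := by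
    rw [Polynomial.aeval_map_algebraMap]
    have := Polynomial.aeval_algHom_apply ((Algebra.ofId ℚ ℂ).mapMatrix) Aq p
    rw [hAq0, map_zero] at this
    have h2 : ((Algebra.ofId ℚ ℂ).mapMatrix Aq : Matrix (Fin k) (Fin k) ℂ) = Bc := by
      rw [AlgHom.mapMatrix_apply]; exact hmapC
    rw [h2] at this
    exact this
  -- the endomorphism is semisimple
  set f : Module.End ℂ (Fin k → ℂ) := Matrix.toLinAlgEquiv' Bc with hf
  have hf0 : Polynomial.aeval f (p.map (algebraMap ℚ ℂ)) = 0 := by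
    have h : Polynomial.aeval f (p.map (algebraMap ℚ ℂ)) =
        Matrix.toLinAlgEquiv' (Polynomial.aeval Bc (p.map (algebraMap ℚ ℂ))) :=
      Polynomial.aeval_algHom_apply Matrix.toLinAlgEquiv'.toAlgHom Bc _
    rw [h, hBc0, map_zero]
  have hss : f.IsSemisimple := Module.End.isSemisimple_of_squarefree_aeval_eq_zero hsqf hf0
  have hfs := hss.isFinitelySemisimple
  have htop0 : ⨆ μ : ℂ, f.maxGenEigenspace μ = ⊤ := Module.End.iSup_maxGenEigenspace_eq_top f
  have htop : ⨆ μ : ℂ, f.eigenspace μ = ⊤ := by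
    rw [← htop0]
    exact iSup_congr fun μ => (hfs.maxGenEigenspace_eq_eigenspace μ).symm
  -- build an eigenbasis
  set S : Set (Fin k → ℂ) := ⋃ μ : ℂ, (f.eigenspace μ : Set (Fin k → ℂ)) with hS
  have hspan : Submodule.span ℂ S = ⊤ := by
    rw [eq_top_iff, ← htop]
    refine iSup_le fun μ => ?_
    exact fun x hx => Submodule.subset_span (Set.mem_iUnion.mpr ⟨μ, hx⟩)
  obtain ⟨t, hts, htsp, hli⟩ := exists_linearIndependent ℂ S
  haveI : Fintype t := (hli.setFinite).fintype
  let b0 : Module.Basis t ℂ (Fin k → ℂ) := Module.Basis.mk hli (by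
    rw [Subtype.range_coe, htsp, hspan])
  let e : t ≃ Fin k := b0.indexEquiv (Pi.basisFun ℂ (Fin k))
  let b : Module.Basis (Fin k) ℂ (Fin k → ℂ) := b0.reindex e
  have hbmem : ∀ i : Fin k, (b i : Fin k → ℂ) ∈ S := by
    intro i
    have : b i = b0 (e.symm i) := b0.reindex_apply e i
    rw [this]
    have : b0 (e.symm i) = ((e.symm i : t) : Fin k → ℂ) := Module.Basis.mk_apply _ _ _
    rw [this]
    exact hts (e.symm i).2
  have hb : ∀ i : Fin k, ∃ μ : ℂ, Bc.mulVec (b i) = μ • b i := by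
    intro i
    obtain ⟨μ, hμ⟩ := Set.mem_iUnion.mp (hbmem i)
    refine ⟨μ, ?_⟩
    have := Module.End.mem_eigenspace_iff.mp hμ
    rw [← this, hf]
    rfl
  choose d hd using hb
  set P : Matrix (Fin k) (Fin k) ℂ := (Pi.basisFun ℂ (Fin k)).toMatrix ⇑b with hP
  haveI := (Pi.basisFun ℂ (Fin k)).invertibleToMatrix b
  have hPu : IsUnit P := isUnit_of_invertible P
  have hPij : ∀ i j, P i j = b j i := by
    intro i j
    rw [hP, Module.Basis.toMatrix_apply]
    simp
  have hcomm : Bc * P = P * Matrix.diagonal d := by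
    ext i j
    have h1 : (Bc * P) i j = Bc.mulVec (b j) i := by
      simp [Matrix.mul_apply, Matrix.mulVec, dotProduct, hPij]
    have h2 : (P * Matrix.diagonal d) i j = b j i * d j := by
      rw [Matrix.mul_apply]
      simp [Matrix.diagonal, hPij i j, Finset.sum_eq_single j, hPij]
    rw [h1, h2, hd j]
    simp [mul_comm]
  refine ⟨P, d, hPu, ?_⟩
  have hPdet : IsUnit P.det := (Matrix.isUnit_iff_isUnit_det P).mp hPu
  calc Bc = Bc * (P * P⁻¹) := by rw [Matrix.mul_nonsing_inv P hPdet, mul_one]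
    _ = (Bc * P) * P⁻¹ := by rw [mul_assoc]
    _ = (P * Matrix.diagonal d) * P⁻¹ := by rw [hcomm]
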